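/- Let A and Ā be symmetric n×n real matrices such that {x : xᵀAx ≤ 0} = {x : xᵀĀx ≤ 0}, and suppose A has both a negative and a positive eigenvalue (λ_min(A) < 0 < λ_max(A)). Then there exists ρ > 0 such that Ā = ρA. -/

import Mathlib

open Matrix

lemma qform_expand (n : ℕ) (M : Matrix (Fin n) (Fin n) ℝ) (u x : Fin n → ℝ) (t : ℝ) :
    (u + t • x) ⬝ᵥ M *ᵥ (u + t • x) =
      u ⬝ᵥ M *ᵥ u + (u ⬝ᵥ M *ᵥ x + x ⬝ᵥ M *ᵥ u) * t + (x ⬝ᵥ M *ᵥ x) * t ^ 2 := by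
  simp [mulVec_add, mulVec_smul, dotProduct_add, add_dotProduct, dotProduct_smul,
    smul_dotProduct, smul_eq_mul]
  ring

lemma quad_key (a c abar cbar s sbar : ℝ) (ha : a ≠ 0) (hac : a * c < 0)
    (H : ∀ t : ℝ, c + s * t + a * t ^ 2 = 0 → cbar + sbar * t + abar * t ^ 2 = 0) :
    cbar * a = abar * c := by
  have hD : 0 < s ^ 2 - 4 * a * c := by nlinarith [sq_nonneg s]
  set r := Real.sqrt (s ^ 2 - 4 * a * c) with hrdef
  have hr2 : r ^ 2 = s ^ 2 - 4 * a * c := Real.sq_sqrt hD.le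
  have hrpos : 0 < r := Real.sqrt_pos.mpr hD
  set t1 := (-s - r) / (2 * a) with ht1
  set t2 := (-s + r) / (2 * a) with ht2
  have h2a : (2:ℝ) * a ≠ 0 := mul_ne_zero two_ne_zero ha
  have h1 : c + s * t1 + a * t1 ^ 2 = 0 := by
    rw [ht1]; field_simp; linear_combination hr2
  have h2 : c + s * t2 + a * t2 ^ 2 = 0 := by
    rw [ht2]; field_simp; linear_combination hr2
  have hne : t1 ≠ t2 := by
    intro h
    rw [ht1, ht2, div_eq_div_iff h2a h2a] at h
    have har : a * r = 0 := by linear_combination (-1/4 : ℝ) * h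
    rcases mul_eq_zero.mp har with h' | h'
    · exact ha h'
    · exact hrpos.ne' h'
  have hprod : a * (t1 * t2) = c := by
    rw [ht1, ht2]; field_simp; linear_combination (-1) * hr2
  have h1b := H t1 h1
  have h2b := H t2 h2
  have hkey : (t1 - t2) * (sbar + abar * (t1 + t2)) = 0 := by linear_combination h1b - h2b
  have hs' : sbar + abar * (t1 + t2) = 0 := by
    rcases mul_eq_zero.mp hkey with h | h
    · exact absurd (sub_eq_zero.mp h) hne
    · exact h
  have hc' : cbar = abar * (t1 * t2) := by linear_combination h1b - t1 * hs'
  linear_combination a * hc' + abar * hprod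

lemma strict_neg (n : ℕ) (A B : Matrix (Fin n) (Fin n) ℝ)
    (hle : ∀ y : Fin n → ℝ, y ⬝ᵥ A *ᵥ y ≤ 0 ↔ y ⬝ᵥ B *ᵥ y ≤ 0)
    (w : Fin n → ℝ) (hw : 0 < w ⬝ᵥ B *ᵥ w)
    (x : Fin n → ℝ) (hx : x ⬝ᵥ A *ᵥ x < 0) : x ⬝ᵥ B *ᵥ x < 0 := by
  by_contra hcon
  push_neg at hcon
  have hx0 : x ⬝ᵥ B *ᵥ x = 0 := le_antisymm ((hle x).mp hx.le) hcon
  set sA := x ⬝ᵥ A *ᵥ w + w ⬝ᵥ A *ᵥ x with hsA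
  set sB := x ⬝ᵥ B *ᵥ w + w ⬝ᵥ B *ᵥ x with hsB
  set aA := w ⬝ᵥ A *ᵥ w with haA
  set aB := w ⬝ᵥ B *ᵥ w with haB
  set qx := x ⬝ᵥ A *ᵥ x with hqx
  have haApos : 0 < aA := by
    by_contra h
    push_neg at h
    exact absurd ((hle w).mp h) (not_le.mpr hw)
  have hden : 0 < |sA| + aA + 1 := by positivity
  set ε := min 1 ((-qx) / (|sA| + aA + 1)) with hε
  have hεpos : 0 < ε := lt_min one_pos (div_pos (by linarith) hden)
  have hε1 : ε ≤ 1 := min_le_left _ _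
  have hεd : ε * (|sA| + aA + 1) ≤ -qx := (le_div_iff₀ hden).mp (min_le_right _ _)
  set t := (if 0 ≤ sB then ε else -ε) with htdef
  have ht2 : t ^ 2 = ε ^ 2 := by
    rcases le_or_gt 0 sB with h | h <;> simp [htdef, h.not_gt, *]
  have htsB : 0 ≤ sB * t := by
    rcases le_or_gt 0 sB with h | h
    · simp only [htdef, if_pos h]; positivity
    · simp only [htdef, if_neg h.not_ge]; nlinarith
  have htsA : sA * t ≤ |sA| * ε := by
    rcases le_or_gt 0 sB with h | h
    · simp only [htdef, if_pos h]
      nlinarith [le_abs_self sA, neg_abs_le sA, hεpos]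
    · simp only [htdef, if_neg h.not_ge]
      nlinarith [le_abs_self sA, neg_abs_le sA, hεpos]
  have hBpos : 0 < (x + t • w) ⬝ᵥ B *ᵥ (x + t • w) := by
    rw [qform_expand]
    have haBpos : 0 < aB := hw
    have : 0 < aB * t ^ 2 := by rw [ht2]; positivity
    rw [← haB, ← hsB, hx0]
    nlinarith
  have hApos : 0 < (x + t • w) ⬝ᵥ A *ᵥ (x + t • w) := by
    by_contra h
    push_neg at h
    exact absurd ((hle _).mp h) (not_le.mpr hBpos)
  rw [qform_expand, ← hqx, ← hsA, ← haA, ht2] at hApos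
  nlinarith [mul_nonneg haApos.le (mul_nonneg hεpos.le (sub_nonneg.mpr hε1)), htsA, hεd, hεpos.le]

lemma herm_qzero (n : ℕ) (M : Matrix (Fin n) (Fin n) ℝ) (hM : M.IsHermitian)
    (h : ∀ x : Fin n → ℝ, x ⬝ᵥ M *ᵥ x = 0) : M = 0 := by
  ext i j
  have hii := h (Pi.single i 1)
  have hjj := h (Pi.single j 1)
  have hij := h (Pi.single i 1 + Pi.single j 1)
  simp [mulVec_add, mulVec_single, dotProduct_add, add_dotProduct, single_dotProduct] at hii hjj hij
  have hsym : M j i = M i j := by simpa using (hM.apply j i).symm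
  simp only [Matrix.zero_apply]
  linarith

lemma exists_neg_vec (n : ℕ) (A : Matrix (Fin n) (Fin n) ℝ) (hA : A.IsHermitian)
    (i : Fin n) (hi : hA.eigenvalues i < 0) :
    ∃ u : Fin n → ℝ, u ⬝ᵥ A *ᵥ u < 0 := by
  set u : Fin n → ℝ := (WithLp.equiv 2 (Fin n → ℝ)) (hA.eigenvectorBasis i) with hu
  have hmv : A *ᵥ u = hA.eigenvalues i • u := hA.mulVec_eigenvectorBasis i
  refine ⟨u, ?_⟩
  have hunz : u ≠ 0 := by
    intro h0
    have : hA.eigenvectorBasis i = 0 := by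
      apply (WithLp.equiv 2 (Fin n → ℝ)).injective
      change u = _
      rw [h0]; simp
    exact hA.eigenvectorBasis.toBasis.ne_zero i (by simpa using this)
  have hdset : 0 < u ⬝ᵥ u := by
    have hne : u ⬝ᵥ u ≠ 0 := fun h0 => hunz (dotProduct_self_eq_zero.mp h0)
    have hnn : 0 ≤ u ⬝ᵥ u := Finset.sum_nonneg fun k _ => mul_self_nonneg (u k)
    exact lt_of_le_of_ne hnn (Ne.symm hne)
  rw [hmv, dotProduct_smul, smul_eq_mul]
  exact mul_neg_of_neg_of_pos hi hdset

lemma exists_pos_vec (n : ℕ) (A : Matrix (Fin n) (Fin n) ℝ) (hA : A.IsHermitian)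
    (i : Fin n) (hi : 0 < hA.eigenvalues i) :
    ∃ w : Fin n → ℝ, 0 < w ⬝ᵥ A *ᵥ w := by
  set u : Fin n → ℝ := (WithLp.equiv 2 (Fin n → ℝ)) (hA.eigenvectorBasis i) with hu
  have hmv : A *ᵥ u = hA.eigenvalues i • u := hA.mulVec_eigenvectorBasis i
  refine ⟨u, ?_⟩
  have hunz : u ≠ 0 := by
    intro h0
    have : hA.eigenvectorBasis i = 0 := by
      apply (WithLp.equiv 2 (Fin n → ℝ)).injective
      change u = _
      rw [h0]; simp
    exact hA.eigenvectorBasis.toBasis.ne_zero i (by simpa using this)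
  have hdset : 0 < u ⬝ᵥ u := by
    have hne : u ⬝ᵥ u ≠ 0 := fun h0 => hunz (dotProduct_self_eq_zero.mp h0)
    have hnn : 0 ≤ u ⬝ᵥ u := Finset.sum_nonneg fun k _ => mul_self_nonneg (u k)
    exact lt_of_le_of_ne hnn (Ne.symm hne)
  rw [hmv, dotProduct_smul, smul_eq_mul]
  exact mul_pos hi hdset

theorem stmt_3 (n : ℕ) (A Abar : Matrix (Fin n) (Fin n) ℝ)
    (hA : A.IsHermitian) (hAbar : Abar.IsHermitian)
    (hset : {x : Fin n → ℝ | x ⬝ᵥ A.mulVec x ≤ 0} = {x : Fin n → ℝ | x ⬝ᵥ Abar.mulVec x ≤ 0})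
    (hneg : ∃ i, hA.eigenvalues i < 0) (hpos : ∃ i, 0 < hA.eigenvalues i) :
    ∃ ρ : ℝ, 0 < ρ ∧ Abar = ρ • A := by
  have hle : ∀ y : Fin n → ℝ, y ⬝ᵥ A *ᵥ y ≤ 0 ↔ y ⬝ᵥ Abar *ᵥ y ≤ 0 := fun y => by
    simpa using Set.ext_iff.mp hset y
  obtain ⟨i, hi⟩ := hneg
  obtain ⟨j, hj⟩ := hpos
  obtain ⟨u, hu⟩ := exists_neg_vec n A hA i hi
  obtain ⟨w, hw⟩ := exists_pos_vec n A hA j hj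
  have hwB : 0 < w ⬝ᵥ Abar *ᵥ w := by
    by_contra h
    push_neg at h
    exact absurd ((hle w).mpr h) (not_le.mpr hw)
  have hltAB : ∀ x, x ⬝ᵥ A *ᵥ x < 0 → x ⬝ᵥ Abar *ᵥ x < 0 := strict_neg n A Abar hle w hwB
  have hltBA : ∀ x, x ⬝ᵥ Abar *ᵥ x < 0 → x ⬝ᵥ A *ᵥ x < 0 :=
    strict_neg n Abar A (fun y => (hle y).symm) w hw
  have heq0 : ∀ x, x ⬝ᵥ A *ᵥ x = 0 → x ⬝ᵥ Abar *ᵥ x = 0 := by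
    intro x hx0
    have h1 : x ⬝ᵥ Abar *ᵥ x ≤ 0 := (hle x).mp hx0.le
    rcases h1.lt_or_eq with h | h
    · exact absurd (hltBA x h) (by simp [hx0])
    · exact h
  have huB : u ⬝ᵥ Abar *ᵥ u < 0 := hltAB u hu
  set ρ := (u ⬝ᵥ Abar *ᵥ u) / (u ⬝ᵥ A *ᵥ u) with hρ
  have hρpos : 0 < ρ := div_pos_of_neg_of_neg huB hu
  have hmain : ∀ v x : Fin n → ℝ, (x ⬝ᵥ A *ᵥ x) ≠ 0 →
      (x ⬝ᵥ A *ᵥ x) * (v ⬝ᵥ A *ᵥ v) < 0 →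
      (v ⬝ᵥ Abar *ᵥ v) * (x ⬝ᵥ A *ᵥ x) = (x ⬝ᵥ Abar *ᵥ x) * (v ⬝ᵥ A *ᵥ v) := by
    intro v x hne hac
    apply quad_key _ _ _ _ (v ⬝ᵥ A *ᵥ x + x ⬝ᵥ A *ᵥ v) (v ⬝ᵥ Abar *ᵥ x + x ⬝ᵥ Abar *ᵥ v) hne hac
    intro t ht
    have h0 : (v + t • x) ⬝ᵥ A *ᵥ (v + t • x) = 0 := by
      rw [qform_expand]; linarith [ht]
    have h0' := heq0 _ h0
    rw [qform_expand] at h0'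
    linarith [h0']
  have key : ∀ x, x ⬝ᵥ Abar *ᵥ x = ρ * (x ⬝ᵥ A *ᵥ x) := by
    intro x
    rcases lt_trichotomy (x ⬝ᵥ A *ᵥ x) 0 with h | h | h
    · have h1 := hmain w x h.ne (by nlinarith)
      have h2 := hmain u w hw.ne' (by nlinarith)
      have goal3 : ((x ⬝ᵥ Abar *ᵥ x) * (u ⬝ᵥ A *ᵥ u) - (u ⬝ᵥ Abar *ᵥ u) * (x ⬝ᵥ A *ᵥ x))
          * (w ⬝ᵥ A *ᵥ w) = 0 := by
        linear_combination (-(u ⬝ᵥ A *ᵥ u)) * h1 - (x ⬝ᵥ A *ᵥ x) * h2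
      have h4 : (x ⬝ᵥ Abar *ᵥ x) * (u ⬝ᵥ A *ᵥ u) = (u ⬝ᵥ Abar *ᵥ u) * (x ⬝ᵥ A *ᵥ x) := by
        rcases mul_eq_zero.mp goal3 with h' | h'
        · linarith [sub_eq_zero.mp h']
        · exact absurd h' hw.ne'
      rw [hρ, div_mul_eq_mul_div, eq_div_iff hu.ne]
      linear_combination h4
    · rw [h, mul_zero]; exact heq0 x h
    · have h2 := hmain u x h.ne' (by nlinarith)
      rw [hρ, div_mul_eq_mul_div, eq_div_iff hu.ne]
      linear_combination -h2
  have hM : (Abar - ρ • A).IsHermitian := by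
    unfold Matrix.IsHermitian
    rw [conjTranspose_sub, conjTranspose_smul, hA.eq, hAbar.eq]
    simp
  have hzero : ∀ x : Fin n → ℝ, x ⬝ᵥ (Abar - ρ • A) *ᵥ x = 0 := by
    intro x
    rw [sub_mulVec, dotProduct_sub, smul_mulVec, dotProduct_smul, smul_eq_mul, key x]
    ring
  have hfin := herm_qzero n _ hM hzero
  exact ⟨ρ, hρpos, by rwa [← sub_eq_zero]⟩
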